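/- In the algebra 𝒟 of differential operators on ℂ[z,z⁻¹], the element σ = z²⊗z⁻¹∂_z − 2z⊗∂_z ∈ 𝒟⊗𝒟 is a Hochschild 1-cycle (i.e., b(σ) = [z², z⁻¹∂_z] − 2[z, ∂_z] = 0), and the Kac–Peterson cocycle Ψ(f(z)∂_z^m, g(z)∂_z^n) = (m!n!/(m+n+1)!)·Res_{z=0} dz·(f^{(n+1)}(z) g^{(m)}(z)) satisfies Ψ(σ) := Ψ(z², z⁻¹∂_z) − 2Ψ(z, ∂_z) = 1. -/

import Mathlib

/-!
STATEMENT 7. In the algebra `𝒟` of differential operators on `ℂ[z,z⁻¹]`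
(realized inside `Module.End ℂ (LaurentPolynomial ℂ)`, with `z` acting by
multiplication by `T 1` and `∂_z` the formal derivative), the element
`σ = z² ⊗ z⁻¹∂_z − 2 z ⊗ ∂_z` is a Hochschild 1-cycle, i.e.
`b(σ) = [z², z⁻¹∂_z] − 2[z, ∂_z] = 0`, and the Kac–Peterson cocycle
`Ψ(f(z)∂_z^m, g(z)∂_z^n) = (m!n!/(m+n+1)!)·Res_{z=0} dz·(f^{(n+1)}(z)·g^{(m)}(z))`
satisfies `Ψ(σ) = Ψ(z², z⁻¹∂_z) − 2Ψ(z, ∂_z) = 1`.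
-/

open LaurentPolynomial

/-- The derivative `∂_z` on Laurent polynomials, `z^n ↦ n z^{n-1}`. -/
noncomputable def lderiv : LaurentPolynomial ℂ →ₗ[ℂ] LaurentPolynomial ℂ :=
  (Finsupp.lsum ℂ fun n : ℤ =>
    (n : ℂ) • LinearMap.toSpanSingleton ℂ (LaurentPolynomial ℂ) (T (n - 1))) ∘ₗ
    (AddMonoidAlgebra.coeffLinearEquiv ℂ).toLinearMap

/-- The residue at `z = 0`: `Res_{z=0} p dz` is the coefficient of `z⁻¹` in `p`. -/
noncomputable def res (p : LaurentPolynomial ℂ) : ℂ := p.coeff (-1)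

/-- Multiplication by the Laurent polynomial `p`, as a differential operator of order `0`. -/
noncomputable def mulOp (p : LaurentPolynomial ℂ) : Module.End ℂ (LaurentPolynomial ℂ) :=
  LinearMap.mulLeft ℂ p

/-- The operator `∂_z` as an element of the algebra of differential operators. -/
noncomputable def derOp : Module.End ℂ (LaurentPolynomial ℂ) := lderiv

/-- The Kac–Peterson cocycle evaluated on the pair of differential operators
`f(z)∂_z^m` and `g(z)∂_z^n` (rank-one case, so the trace is trivial):
`Ψ(f∂^m, g∂^n) = (m!n!/(m+n+1)!) · Res_{z=0} (f^{(n+1)} g^{(m)}) dz`. -/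
noncomputable def KP (f : LaurentPolynomial ℂ) (m : ℕ) (g : LaurentPolynomial ℂ) (n : ℕ) : ℂ :=
  ((m.factorial : ℂ) * (n.factorial : ℂ) / ((m + n + 1).factorial : ℂ)) *
    res ((⇑lderiv)^[n + 1] f * (⇑lderiv)^[m] g)

lemma lderiv_T (n : ℤ) : lderiv (T n) = (n : ℂ) • T (n - 1) := by
  show lderiv (AddMonoidAlgebra.single n 1) = _
  rw [lderiv, LinearMap.comp_apply]
  show (Finsupp.lsum ℂ _) (Finsupp.single n (1 : ℂ)) = _
  rw [Finsupp.lsum_single]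
  simp [LinearMap.toSpanSingleton_apply]

lemma T_mul_T (m n : ℤ) : (T m : LaurentPolynomial ℂ) * T n = T (m + n) := (T_add m n).symm

/-- `σ = z²⊗z⁻¹∂_z − 2z⊗∂_z` is a Hochschild 1-cycle and `Ψ(σ) = 1`. -/
theorem kac_peterson_pairing_with_hochschild_cycle :
    (mulOp (T 2) * (mulOp (T (-1)) * derOp) - (mulOp (T (-1)) * derOp) * mulOp (T 2))
        - (2 : ℂ) • (mulOp (T 1) * derOp - derOp * mulOp (T 1)) = 0 ∧
    KP (T 2) 0 (T (-1)) 1 - 2 * KP (T 1) 0 1 1 = 1 := by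
  constructor
  · refine AddMonoidAlgebra.lhom_ext' fun a => LinearMap.ext fun b => ?_
    have hb : (AddMonoidAlgebra.single a b : LaurentPolynomial ℂ) = b • T a := by
      rw [T, AddMonoidAlgebra.smul_single', mul_one]
    rw [LinearMap.comp_apply, LinearMap.comp_apply, AddMonoidAlgebra.lsingle_apply, hb, map_smul, map_smul]
    simp only [LinearMap.sub_apply, LinearMap.smul_apply, LinearMap.zero_apply, smul_zero]
    repeat erw [Module.End.mul_apply]
    simp only [mulOp, derOp, LinearMap.mulLeft_apply]
    rw [T_mul_T, T_mul_T]; repeat erw [lderiv_T]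
    simp only [mul_smul_comm, T_mul_T, smul_smul]
    repeat rw [T_mul_T]
    have e1 : (2:ℤ) + (-1 + (a - 1)) = a := by ring
    have e2 : (-1:ℤ) + (2 + a - 1) = a := by ring
    have e3 : (1:ℤ) + (a - 1) = a := by ring
    have e4 : (1:ℤ) + a - 1 = a := by ring
    rw [e1, e2, e3, e4]
    push_cast
    module
  · have hT0 : lderiv (1 : LaurentPolynomial ℂ) = 0 := by
      rw [← T_zero, lderiv_T]; simp
    have h2 : (⇑lderiv)^[2] (T 2 : LaurentPolynomial ℂ) = (2 : ℂ) • T 0 := by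
      rw [Function.iterate_succ, Function.iterate_one, Function.comp_apply, lderiv_T, map_smul,
        lderiv_T]
      norm_num [smul_smul]
    have h1 : (⇑lderiv)^[2] (T 1 : LaurentPolynomial ℂ) = 0 := by
      rw [Function.iterate_succ, Function.iterate_one, Function.comp_apply, lderiv_T, map_smul]
      norm_num [hT0]
    simp only [KP, h2, h1, Function.iterate_zero, id_eq, zero_mul, smul_mul_assoc]
    rw [show res (0 : LaurentPolynomial ℂ) = 0 by simp [res]]
    rw [T_mul_T]
    have : res ((2 : ℂ) • (T (0 + -1) : LaurentPolynomial ℂ)) = 2 := by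
      show ((2 : ℂ) • (T (0 + -1) : LaurentPolynomial ℂ)).coeff (-1) = 2
      erw [AddMonoidAlgebra.coeff_smul_apply]
      norm_num
    rw [this]
    norm_num
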